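/- If d = 1, then G_λ(0, 0) ~ γ_1 √π / √λ as λ → 0+; that is, lim_{λ→0+} √λ · G_λ(0, 0) = γ_1 √π. -/

import Mathlib

open MeasureTheory Real Filter Topology Asymptotics

/-- Fourier symbol `φ(θ) = ∑_z a(z) cos(zθ)` of the random walk on `ℤ`. -/
noncomputable def phi1 (a : ℤ → ℝ) (θ : ℝ) : ℝ :=
  ∑' z : ℤ, a z * Real.cos ((z : ℝ) * θ)

/-- Transition probability `p(t;x,y) = (2π)⁻¹ ∫_{-π}^{π} e^{φ(θ)t} cos(θ(y-x)) dθ`. -/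
noncomputable def p1 (a : ℤ → ℝ) (t : ℝ) (x y : ℤ) : ℝ :=
  (2 * π)⁻¹ * ∫ θ in (-π)..π, Real.exp (phi1 a θ * t) * Real.cos (θ * ((y : ℝ) - (x : ℝ)))

/-- Laplace transform `G_λ(x,y) = ∫_0^∞ e^{-λt} p(t;x,y) dt`. -/
noncomputable def G1 (a : ℤ → ℝ) (lam : ℝ) (x y : ℤ) : ℝ :=
  ∫ t in Set.Ioi (0 : ℝ), Real.exp (-lam * t) * p1 a t x y

/-- `φ''(0) = -∑_z a(z) z²`. -/
noncomputable def phi1'' (a : ℤ → ℝ) : ℝ := -∑' z : ℤ, a z * (z : ℝ) ^ 2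

/-- `γ₁ = 1/√(2π |φ''(0)|)`. -/
noncomputable def gam1 (a : ℤ → ℝ) : ℝ := 1 / Real.sqrt (2 * π * |phi1'' a|)

/-- `ρ₁(r) = (a/(2π)) ∫_{-π}^{π} (cos(rθ) - 1)/φ(θ) dθ` for `r ≠ 0`, and `ρ₁(0) = 1`. -/
noncomputable def rho1 (a : ℤ → ℝ) (r : ℤ) : ℝ :=
  if r = 0 then 1 else
    (-(a 0) / (2 * π)) * ∫ θ in (-π)..π, (Real.cos ((r : ℝ) * θ) - 1) / phi1 a θ

/-- `γ̃₁(r) = (r²/(4π)) ∫_ℝ v² e^{φ''(0)v²/2} dv`. -/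
noncomputable def gamTilde1 (a : ℤ → ℝ) (r : ℤ) : ℝ :=
  ((r : ℝ) ^ 2 / (4 * π)) * ∫ v : ℝ, v ^ 2 * Real.exp (phi1'' a * v ^ 2 / 2)

/-- The constant `C₁(x,y)` from Theorem 1 of the paper (with `a = -a(0)`). -/
noncomputable def C1Const (a : ℤ → ℝ) (x y : ℤ) : ℝ :=
  (rho1 a (y - x) + rho1 a x - rho1 a y) / (4 * (-(a 0)) * π * gam1 a) +
    (-(a 0)) * π * (y : ℝ) ^ 2 * gam1 a ^ 3 *
      (rho1 a (y - x) - rho1 a x - rho1 a y) / (rho1 a y) ^ 2 +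
    2 * (-(a 0)) * π * (x : ℝ) * (y : ℝ) * gam1 a ^ 3 / rho1 a y


section AuxGlam
open Set

variable {a : ℤ → ℝ}

private lemma Glam_summable_cos (ha : Summable a) (θ : ℝ) :
    Summable (fun z : ℤ => a z * Real.cos ((z : ℝ) * θ)) := by
  refine Summable.of_norm_bounded ha.abs (fun z => ?_)
  rw [norm_mul, Real.norm_eq_abs, Real.norm_eq_abs]
  calc |a z| * |Real.cos (z * θ)| ≤ |a z| * 1 := by
        gcongr; exact Real.abs_cos_le_one _
    _ = |a z| := mul_one _

private lemma Glam_summable_cos_sub (ha : Summable a) (θ : ℝ) :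
    Summable (fun z : ℤ => a z * (Real.cos ((z : ℝ) * θ) - 1)) := by
  have := (Glam_summable_cos ha θ).sub ha
  simpa [mul_sub] using this

private lemma Glam_phi1_eq (hsum : HasSum a 0) (θ : ℝ) :
    phi1 a θ = ∑' z : ℤ, a z * (Real.cos ((z : ℝ) * θ) - 1) := by
  have ha := hsum.summable
  have h := Summable.tsum_sub (Glam_summable_cos ha θ) ha
  simp only [mul_sub, mul_one]
  rw [h, hsum.tsum_eq, sub_zero, phi1]

private lemma Glam_phi1_zero (hsum : HasSum a 0) : phi1 a 0 = 0 := by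
  rw [Glam_phi1_eq hsum]; simp

private lemma Glam_term_nonpos (hpos : ∀ z : ℤ, z ≠ 0 → 0 ≤ a z) (θ : ℝ) (z : ℤ) :
    a z * (Real.cos ((z : ℝ) * θ) - 1) ≤ 0 := by
  rcases eq_or_ne z 0 with rfl | hz
  · simp
  · exact mul_nonpos_of_nonneg_of_nonpos (hpos z hz)
      (sub_nonpos.mpr (Real.cos_le_one _))

private lemma Glam_phi1_nonpos (hpos : ∀ z : ℤ, z ≠ 0 → 0 ≤ a z) (hsum : HasSum a 0) (θ : ℝ) :
    phi1 a θ ≤ 0 := by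
  rw [Glam_phi1_eq hsum]
  exact tsum_nonpos (Glam_term_nonpos hpos θ)

private lemma Glam_phi1_continuous (ha : Summable a) : Continuous (phi1 a) := by
  refine continuous_tsum (fun z => ?_) ha.abs (fun z θ => ?_)
  · exact continuous_const.mul (Real.continuous_cos.comp (continuous_const.mul continuous_id))
  · rw [Real.norm_eq_abs, abs_mul]
    calc |a z| * |Real.cos (z * θ)| ≤ |a z| * 1 := by
          gcongr; exact Real.abs_cos_le_one _
      _ = |a z| := mul_one _

/-- subgroup of `z` with `z*θ ∈ 2πℤ` -/
private def GlamThetaSubgroup (θ : ℝ) : AddSubgroup ℤ where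
  carrier := {z : ℤ | ∃ n : ℤ, (n : ℝ) * (2 * π) = (z : ℝ) * θ}
  zero_mem' := ⟨0, by simp⟩
  add_mem' := by
    rintro x y ⟨n, hn⟩ ⟨m, hm⟩
    exact ⟨n + m, by push_cast; rw [add_mul, hn, hm, add_mul]⟩
  neg_mem' := by
    rintro x ⟨n, hn⟩
    exact ⟨-n, by push_cast; rw [neg_mul, hn, neg_mul]⟩

private lemma Glam_exists_good_z
    (hirr : AddSubgroup.closure {z : ℤ | 0 < a z} = ⊤)
    {θ : ℝ} (hθ : θ ∈ Icc (-π) π) (hθ0 : θ ≠ 0) :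
    ∃ z : ℤ, 0 < a z ∧ Real.cos ((z : ℝ) * θ) < 1 := by
  by_contra h
  push_neg at h
  have hsub : {z : ℤ | 0 < a z} ⊆ (GlamThetaSubgroup θ : Set ℤ) := by
    intro z hz
    have h1 := h z hz
    have h2 : Real.cos ((z : ℝ) * θ) = 1 := le_antisymm (Real.cos_le_one _) h1
    exact (Real.cos_eq_one_iff _).mp h2
  have : (⊤ : AddSubgroup ℤ) ≤ GlamThetaSubgroup θ := by
    rw [← hirr]; exact (AddSubgroup.closure_le _).mpr hsub
  obtain ⟨n, hn⟩ := this (AddSubgroup.mem_top 1)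
  simp only [Int.cast_one, one_mul] at hn
  have hπ := Real.pi_pos
  have hn0 : n = 0 := by
    by_contra hne
    have : (1 : ℝ) ≤ |(n : ℝ)| := by
      have := Int.one_le_abs (by exact_mod_cast hne : n ≠ 0)
      exact_mod_cast this
    have h1 : 2 * π ≤ |(n : ℝ)| * (2 * π) := by nlinarith
    have h2 : |(n : ℝ) * (2 * π)| = |(n : ℝ)| * (2 * π) := by
      rw [abs_mul, abs_of_pos (by positivity : (0:ℝ) < 2 * π)]
    have h3 : |θ| ≤ π := abs_le.mpr hθ
    rw [hn] at h2
    nlinarith [abs_le.mpr hθ]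
  rw [hn0] at hn
  simp at hn
  exact hθ0 hn.symm

private lemma Glam_phi1_neg (hpos : ∀ z : ℤ, z ≠ 0 → 0 ≤ a z)
    (hsum : HasSum a 0)
    (hirr : AddSubgroup.closure {z : ℤ | 0 < a z} = ⊤)
    {θ : ℝ} (hθ : θ ∈ Icc (-π) π) (hθ0 : θ ≠ 0) :
    phi1 a θ < 0 := by
  obtain ⟨z0, hz0, hcos⟩ := Glam_exists_good_z hirr hθ hθ0
  have hterm : a z0 * (Real.cos ((z0 : ℝ) * θ) - 1) < 0 :=
    mul_neg_of_pos_of_neg hz0 (by linarith)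
  rw [Glam_phi1_eq hsum]
  have hs := Glam_summable_cos_sub hsum.summable θ
  have key : ∑' z : ℤ, a z * (Real.cos ((z : ℝ) * θ) - 1)
      ≤ a z0 * (Real.cos ((z0 : ℝ) * θ) - 1) := by
    have := Summable.le_tsum hs.neg z0 (fun j _ => neg_nonneg.mpr (Glam_term_nonpos hpos θ j))
    have h2 : ∑' z : ℤ, -(a z * (Real.cos ((z : ℝ) * θ) - 1))
        = -∑' z : ℤ, a z * (Real.cos ((z : ℝ) * θ) - 1) := tsum_neg
    rw [h2] at this
    linarith
  linarith

private lemma Glam_exists_pos_z (hneg : a 0 < 0)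
    (hirr : AddSubgroup.closure {z : ℤ | 0 < a z} = ⊤) :
    ∃ z : ℤ, z ≠ 0 ∧ 0 < a z := by
  by_contra h
  push_neg at h
  have hempty : {z : ℤ | 0 < a z} = (∅ : Set ℤ) := by
    ext z
    simp only [Set.mem_setOf_eq, Set.mem_empty_iff_false, iff_false, not_lt]
    rcases eq_or_ne z 0 with rfl | hz
    · exact hneg.le
    · exact h z hz
  rw [hempty, AddSubgroup.closure_empty] at hirr
  have : (1 : ℤ) ∈ (⊥ : AddSubgroup ℤ) := hirr ▸ AddSubgroup.mem_top 1
  simp at this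

private lemma Glam_S_pos (hpos : ∀ z : ℤ, z ≠ 0 → 0 ≤ a z) (hneg : a 0 < 0)
    (hvar : Summable fun z : ℤ => (z : ℝ) ^ 2 * a z)
    (hirr : AddSubgroup.closure {z : ℤ | 0 < a z} = ⊤) :
    0 < ∑' z : ℤ, a z * (z : ℝ) ^ 2 := by
  obtain ⟨z0, hz0, haz0⟩ := Glam_exists_pos_z hneg hirr
  have hvar' : Summable (fun z : ℤ => a z * (z : ℝ) ^ 2) := by
    simpa [mul_comm] using hvar
  refine Summable.tsum_pos hvar' (fun z => ?_) z0 ?_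
  · rcases eq_or_ne z 0 with rfl | hz
    · simp
    · exact mul_nonneg (hpos z hz) (sq_nonneg _)
  · have : (0:ℝ) < (z0:ℝ)^2 := by
      have : (z0:ℝ) ≠ 0 := Int.cast_ne_zero.mpr hz0
      positivity
    positivity

private lemma Glam_one_sub_cos_le (x : ℝ) : 1 - Real.cos x ≤ x ^ 2 / 2 := by
  have h1 : Real.cos x = 1 - 2 * Real.sin (x / 2) ^ 2 := by
    have h0 := Real.cos_sq (x / 2)
    rw [mul_div_cancel₀ x (two_ne_zero' ℝ)] at h0
    have h2 := Real.sin_sq_add_cos_sq (x / 2)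
    nlinarith
  have h3 : |Real.sin (x / 2)| ≤ |x / 2| := Real.abs_sin_le_abs
  have h4 : Real.sin (x / 2) ^ 2 ≤ (x / 2) ^ 2 := by
    rw [← sq_abs, ← sq_abs (x / 2)]
    exact pow_le_pow_left₀ (abs_nonneg _) h3 2
  nlinarith

private lemma Glam_term_tendsto (a : ℤ → ℝ) (z : ℤ) :
    Filter.Tendsto (fun θ : ℝ => a z * (Real.cos ((z : ℝ) * θ) - 1) / θ ^ 2)
      (𝓝[≠] (0 : ℝ)) (𝓝 (-(a z * (z : ℝ) ^ 2 / 2))) := by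
  rcases eq_or_ne z 0 with rfl | hz
  · simpa using tendsto_const_nhds (α := ℝ) (f := 𝓝[≠] (0:ℝ)) (a := (0:ℝ))
  have hz' : ((z : ℝ)) ≠ 0 := Int.cast_ne_zero.mpr hz
  have key : Filter.Tendsto (fun θ : ℝ => (Real.cos ((z : ℝ) * θ) - 1) / θ ^ 2)
      (𝓝[≠] (0 : ℝ)) (𝓝 (-((z : ℝ) ^ 2 / 2))) := by
    rw [show (-((z:ℝ)^2/2)) = 0 + -((z:ℝ)^2/2) by ring]
    have hdiff : Filter.Tendsto (fun θ : ℝ =>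
        (Real.cos ((z : ℝ) * θ) - 1) / θ ^ 2 + (z : ℝ) ^ 2 / 2)
        (𝓝[≠] (0 : ℝ)) (𝓝 0) := by
      apply squeeze_zero_norm' (a := fun θ : ℝ => (z:ℝ)^4 * (5/96) * θ ^ 2)
      · have hev : ∀ᶠ θ : ℝ in 𝓝[≠] (0:ℝ), |θ| ≤ 1 / |(z:ℝ)| := by
          apply eventually_nhdsWithin_of_eventually_nhds
          have : (0:ℝ) < 1 / |(z:ℝ)| := by positivity
          filter_upwards [Metric.ball_mem_nhds (0:ℝ) this] with θ hθ
          rw [Metric.mem_ball, Real.dist_eq, sub_zero] at hθ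
          exact hθ.le
        filter_upwards [hev, self_mem_nhdsWithin] with θ hθ (hθ0 : θ ≠ 0)
        have hb : |(z:ℝ) * θ| ≤ 1 := by
          rw [abs_mul]
          calc |(z:ℝ)| * |θ| ≤ |(z:ℝ)| * (1 / |(z:ℝ)|) := by gcongr
            _ = 1 := by field_simp
        have hcb := Real.cos_bound hb
        have hθ2 : (0:ℝ) < θ ^ 2 := by positivity
        have heq : (Real.cos ((z : ℝ) * θ) - 1) / θ ^ 2 + (z : ℝ) ^ 2 / 2
            = (Real.cos ((z:ℝ)*θ) - (1 - ((z:ℝ)*θ)^2/2)) / θ ^ 2 := by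
          field_simp; ring
        rw [Real.norm_eq_abs, heq, abs_div, abs_of_pos hθ2]
        rw [div_le_iff₀ hθ2]
        have h5 : |(z:ℝ)| ^ 4 = (z:ℝ) ^ 4 := by
          rw [← abs_pow, abs_of_nonneg (by positivity)]
        have h6 : |θ| ^ 4 = θ ^ 2 * θ ^ 2 := by
          rw [← abs_pow, abs_of_nonneg (by positivity)]; ring
        calc |Real.cos ((z:ℝ)*θ) - (1 - ((z:ℝ)*θ)^2/2)| ≤ |(z:ℝ)*θ|^4 * (5/96) := hcb
          _ = (z:ℝ)^4 * (5/96) * θ^2 * (θ^2) := by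
              rw [abs_mul, mul_pow, h5, h6]; ring
          _ ≤ _ := le_refl _
      · have : Filter.Tendsto (fun θ : ℝ => (z:ℝ)^4 * (5/96) * θ ^ 2) (𝓝 (0:ℝ)) (𝓝 0) := by
          have hc : Continuous (fun θ : ℝ => (z:ℝ)^4 * (5/96) * θ ^ 2) := by
            continuity
          simpa using hc.tendsto 0
        exact this.mono_left nhdsWithin_le_nhds
    have := hdiff.add_const (-((z:ℝ)^2/2))
    simpa [add_assoc] using this
  have := key.const_mul (a z)
  simp only [mul_div_assoc]
  convert this using 2
  ring

private lemma Glam_phi1_div_sq_tendsto (hsum : HasSum a 0)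
    (hvar : Summable fun z : ℤ => (z : ℝ) ^ 2 * a z) :
    Filter.Tendsto (fun θ : ℝ => phi1 a θ / θ ^ 2) (𝓝[≠] (0 : ℝ))
      (𝓝 (-((∑' z : ℤ, a z * (z : ℝ) ^ 2) / 2))) := by
  have hvar' : Summable (fun z : ℤ => a z * (z : ℝ) ^ 2) := by
    simpa [mul_comm] using hvar
  have hbound : Summable (fun z : ℤ => |a z| * (z : ℝ) ^ 2 / 2) := by
    have := hvar'.abs
    have h2 : (fun z : ℤ => |a z * (z : ℝ) ^ 2|) = fun z : ℤ => |a z| * (z : ℝ) ^ 2 := by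
      funext z; rw [abs_mul, abs_pow, sq_abs]
    rw [h2] at this
    exact this.div_const 2
  have key := tendsto_tsum_of_dominated_convergence (𝓕 := 𝓝[≠] (0:ℝ))
    (f := fun θ z => a z * (Real.cos ((z : ℝ) * θ) - 1) / θ ^ 2)
    (g := fun z => -(a z * (z : ℝ) ^ 2 / 2))
    (bound := fun z : ℤ => |a z| * (z : ℝ) ^ 2 / 2)
    hbound (Glam_term_tendsto a) ?_
  · have hg : ∑' z : ℤ, -(a z * (z : ℝ) ^ 2 / 2)
        = -((∑' z : ℤ, a z * (z : ℝ) ^ 2) / 2) := by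
      rw [tsum_neg, ← tsum_div_const]
    rw [hg] at key
    apply key.congr'
    filter_upwards [self_mem_nhdsWithin] with θ (hθ : θ ≠ 0)
    rw [Glam_phi1_eq hsum, tsum_div_const]
  · filter_upwards [self_mem_nhdsWithin] with θ (hθ : θ ≠ 0) z
    have hθ2 : (0:ℝ) < θ ^ 2 := by positivity
    rw [Real.norm_eq_abs, abs_div, abs_of_pos hθ2,
      div_le_div_iff₀ hθ2 (by norm_num : (0:ℝ) < 2)]
    have h1 : |a z * (Real.cos ((z:ℝ) * θ) - 1)| = |a z| * (1 - Real.cos ((z:ℝ) * θ)) := by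
      rw [abs_mul, abs_of_nonpos (sub_nonpos.mpr (Real.cos_le_one _))]
      ring
    rw [h1]
    have h2 := Glam_one_sub_cos_le ((z:ℝ) * θ)
    have h3 : (0:ℝ) ≤ |a z| := abs_nonneg _
    nlinarith [sq_nonneg ((z:ℝ) * θ), mul_pow (z:ℝ) θ 2]

private lemma Glam_quad_bound (hpos : ∀ z : ℤ, z ≠ 0 → 0 ≤ a z) (hneg : a 0 < 0)
    (hsum : HasSum a 0)
    (hvar : Summable fun z : ℤ => (z : ℝ) ^ 2 * a z)
    (hirr : AddSubgroup.closure {z : ℤ | 0 < a z} = ⊤) :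
    ∃ c : ℝ, 0 < c ∧ ∀ θ ∈ Icc (-π) π, phi1 a θ ≤ -(c * θ ^ 2) := by
  set S := ∑' z : ℤ, a z * (z : ℝ) ^ 2 with hSdef
  have hS : 0 < S := Glam_S_pos hpos hneg hvar hirr
  set ψ : ℝ → ℝ := fun θ => if θ = 0 then S / 2 else -(phi1 a θ) / θ ^ 2 with hψdef
  have hψ0 : ψ 0 = S / 2 := by simp [hψdef]
  have hψne : ∀ θ : ℝ, θ ≠ 0 → ψ θ = -(phi1 a θ) / θ ^ 2 := by
    intro θ hθ; simp [hψdef, hθ]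
  have hψcont : Continuous ψ := by
    rw [continuous_iff_continuousAt]
    intro θ0
    rcases eq_or_ne θ0 0 with rfl | hθ0
    · rw [ContinuousAt, hψ0, ← nhdsNE_sup_pure, Filter.tendsto_sup]
      constructor
      · have h1 := (Glam_phi1_div_sq_tendsto hsum hvar).neg
        rw [neg_neg] at h1
        apply h1.congr'
        filter_upwards [self_mem_nhdsWithin] with θ (hθ : θ ≠ 0)
        rw [hψne θ hθ, neg_div]
      · rw [Filter.tendsto_pure_left]
        intro s hs
        simpa [hψ0] using mem_of_mem_nhds hs
    · have hf : ContinuousAt (fun θ : ℝ => -(phi1 a θ) / θ ^ 2) θ0 :=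
        ((Glam_phi1_continuous hsum.summable).neg.continuousAt).div
          ((continuous_pow 2).continuousAt) (pow_ne_zero 2 hθ0)
      apply hf.congr
      filter_upwards [isOpen_compl_singleton.mem_nhds hθ0] with θ (hθ : θ ≠ 0)
      rw [hψne θ hθ]
  have hne : (Icc (-π) π).Nonempty := ⟨0, by constructor <;> nlinarith [Real.pi_pos]⟩
  obtain ⟨θm, hθm, hmin⟩ := isCompact_Icc.exists_isMinOn hne hψcont.continuousOn
  have hψpos : ∀ θ ∈ Icc (-π) π, 0 < ψ θ := by
    intro θ hθ
    rcases eq_or_ne θ 0 with rfl | hθ0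
    · rw [hψ0]; positivity
    · rw [hψne θ hθ0]
      have h1 : phi1 a θ < 0 := Glam_phi1_neg hpos hsum hirr hθ hθ0
      have h2 : (0:ℝ) < θ ^ 2 := by positivity
      exact div_pos (by linarith) h2
  refine ⟨ψ θm, hψpos θm hθm, fun θ hθ => ?_⟩
  rcases eq_or_ne θ 0 with rfl | hθ0
  · rw [Glam_phi1_zero hsum]; simp
  · have h1 : ψ θm ≤ ψ θ := hmin hθ
    rw [hψne θ hθ0] at h1
    have h2 : (0:ℝ) < θ ^ 2 := by positivity
    rw [div_eq_mul_inv] at h1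
    have h3 : ψ θm * θ ^ 2 ≤ -(phi1 a θ) := by
      rw [← le_div_iff₀ h2, div_eq_mul_inv]
      exact h1
    linarith

private lemma Glam_integral_exp_neg_mul {b : ℝ} (hb : 0 < b) :
    ∫ t in Ioi (0:ℝ), Real.exp (-(b * t)) = b⁻¹ := by
  have := integral_comp_mul_left_Ioi (fun y => Real.exp (-y)) 0 hb
  simp only [mul_zero] at this
  rw [show (fun t => Real.exp (-(b * t))) = fun t => (fun y => Real.exp (-y)) (b * t) from rfl]
  rw [this, integral_exp_neg_Ioi, neg_zero, Real.exp_zero, smul_eq_mul, mul_one]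

private lemma Glam_G1_eq (hpos : ∀ z : ℤ, z ≠ 0 → 0 ≤ a z) (hsum : HasSum a 0)
    {lam : ℝ} (hlam : 0 < lam) :
    G1 a lam 0 0 = (2 * π)⁻¹ * ∫ θ in Ioc (-π) π, (lam - phi1 a θ)⁻¹ := by
  have hle : -π ≤ π := by linarith [Real.pi_pos]
  have hp1 : ∀ t : ℝ, p1 a t 0 0 = (2 * π)⁻¹ * ∫ θ in Ioc (-π) π, Real.exp (phi1 a θ * t) := by
    intro t
    rw [p1, intervalIntegral.integral_of_le hle]
    simp
  have hG : G1 a lam 0 0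
      = (2 * π)⁻¹ * ∫ t in Ioi (0:ℝ), ∫ θ in Ioc (-π) π,
          Real.exp ((phi1 a θ - lam) * t) := by
    rw [G1, ← integral_const_mul]
    refine setIntegral_congr_fun measurableSet_Ioi (fun t _ => ?_)
    rw [hp1 t, ← mul_assoc, mul_comm (Real.exp (-lam * t)) ((2 * π)⁻¹), mul_assoc,
      ← integral_const_mul]
    congr 1
    refine setIntegral_congr_fun measurableSet_Ioc (fun θ _ => ?_)
    rw [← Real.exp_add]
    congr 1
    ring
  rw [hG]
  congr 1
  have hF : Integrable (Function.uncurry fun t θ => Real.exp ((phi1 a θ - lam) * t))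
      ((volume.restrict (Ioi (0:ℝ))).prod (volume.restrict (Ioc (-π) π))) := by
    have hmeas : AEStronglyMeasurable
        (Function.uncurry fun t θ => Real.exp ((phi1 a θ - lam) * t))
        ((volume.restrict (Ioi (0:ℝ))).prod (volume.restrict (Ioc (-π) π))) := by
      apply Continuous.aestronglyMeasurable
      exact Real.continuous_exp.comp
        ((((Glam_phi1_continuous hsum.summable).comp continuous_snd).sub continuous_const).mul
          continuous_fst)
    have hg : Integrable (fun p : ℝ × ℝ => Real.exp (-lam * p.1) * 1)
        ((volume.restrict (Ioi (0:ℝ))).prod (volume.restrict (Ioc (-π) π))) := by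
      exact Integrable.mul_prod (exp_neg_integrableOn_Ioi 0 hlam)
        (integrableOn_const measure_Ioc_lt_top.ne)
    refine hg.mono hmeas ?_
    rw [Measure.prod_restrict]
    filter_upwards [ae_restrict_mem ((measurableSet_Ioi).prod measurableSet_Ioc)]
      with p hp
    obtain ⟨hp1', hp2'⟩ := hp
    have ht : (0:ℝ) ≤ p.1 := le_of_lt hp1'
    have hphi : phi1 a p.2 ≤ 0 := Glam_phi1_nonpos hpos hsum p.2
    rw [Function.uncurry, Real.norm_eq_abs, Real.norm_eq_abs, abs_of_pos (Real.exp_pos _),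
      mul_one, abs_of_pos (Real.exp_pos _)]
    exact Real.exp_le_exp.mpr (by nlinarith)
  have hswap := integral_integral_swap hF
  rw [hswap]
  apply setIntegral_congr_fun measurableSet_Ioc
  intro θ _
  have hb : 0 < lam - phi1 a θ := by
    have := Glam_phi1_nonpos hpos hsum θ
    linarith
  have : (fun t => Real.exp ((phi1 a θ - lam) * t))
      = fun t => Real.exp (-((lam - phi1 a θ) * t)) := by
    funext t; congr 1; ring
  dsimp only
  rw [this, Glam_integral_exp_neg_mul hb]

private lemma Glam_integral_inv_one_add_mul_sq {k : ℝ} (hk : 0 < k) :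
    ∫ u : ℝ, (1 + k * u ^ 2)⁻¹ = π / Real.sqrt k := by
  have hsk : 0 < Real.sqrt k := Real.sqrt_pos.mpr hk
  have h1 : (fun u : ℝ => (1 + k * u ^ 2)⁻¹)
      = fun u : ℝ => (fun x : ℝ => (1 + x ^ 2)⁻¹) (Real.sqrt k * u) := by
    funext u
    simp only [mul_pow, Real.sq_sqrt hk.le]
  rw [h1, Measure.integral_comp_mul_left (fun x : ℝ => (1 + x ^ 2)⁻¹) (Real.sqrt k),
    integral_univ_inv_one_add_sq, smul_eq_mul, abs_of_pos (inv_pos.mpr hsk)]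
  rw [inv_mul_eq_div]

private lemma Glam_integrable_inv_one_add_mul_sq {k : ℝ} (hk : 0 < k) :
    Integrable (fun u : ℝ => (1 + k * u ^ 2)⁻¹) := by
  have h1 : (fun u : ℝ => (1 + k * u ^ 2)⁻¹)
      = fun u : ℝ => (fun x : ℝ => (1 + x ^ 2)⁻¹) (Real.sqrt k * u) := by
    funext u
    simp only [mul_pow, Real.sq_sqrt hk.le]
  rw [h1]
  exact integrable_inv_one_add_sq.comp_mul_left' (Real.sqrt_pos.mpr hk).ne'

private lemma Glam_sqrt_mul_J {lam : ℝ} (hlam : 0 < lam) :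
    Real.sqrt lam * ∫ θ in Ioc (-π) π, (lam - phi1 a θ)⁻¹
      = ∫ u : ℝ, (Ioc (-π) π).indicator
          (fun θ => lam * (lam - phi1 a θ)⁻¹) (Real.sqrt lam * u) := by
  have hs : 0 < Real.sqrt lam := Real.sqrt_pos.mpr hlam
  rw [Measure.integral_comp_mul_left ((Ioc (-π) π).indicator
      (fun θ => lam * (lam - phi1 a θ)⁻¹)) (Real.sqrt lam)]
  rw [integral_indicator measurableSet_Ioc, integral_const_mul, smul_eq_mul,
    abs_of_pos (inv_pos.mpr hs)]
  rw [← mul_assoc]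
  congr 1
  rw [← Real.sqrt_mul_self hlam.le]
  field_simp
  rw [Real.sq_sqrt (Real.sqrt_nonneg _)]

private lemma Glam_main_limit (hpos : ∀ z : ℤ, z ≠ 0 → 0 ≤ a z) (hneg : a 0 < 0)
    (hsum : HasSum a 0)
    (hvar : Summable fun z : ℤ => (z : ℝ) ^ 2 * a z)
    (hirr : AddSubgroup.closure {z : ℤ | 0 < a z} = ⊤) :
    Tendsto (fun lam : ℝ => Real.sqrt lam * ∫ θ in Ioc (-π) π, (lam - phi1 a θ)⁻¹)
      (𝓝[>] (0:ℝ))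
      (𝓝 (π / Real.sqrt ((∑' z : ℤ, a z * (z : ℝ) ^ 2) / 2))) := by
  set S := ∑' z : ℤ, a z * (z : ℝ) ^ 2 with hSdef
  have hS : 0 < S := Glam_S_pos hpos hneg hvar hirr
  obtain ⟨c, hc, hquad⟩ := Glam_quad_bound hpos hneg hsum hvar hirr
  set F : ℝ → ℝ → ℝ := fun lam u => (Ioc (-π) π).indicator
      (fun θ => lam * (lam - phi1 a θ)⁻¹) (Real.sqrt lam * u) with hFdef
  have key : Tendsto (fun lam : ℝ => ∫ u : ℝ, F lam u) (𝓝[>] (0:ℝ))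
      (𝓝 (∫ u : ℝ, (1 + (S / 2) * u ^ 2)⁻¹)) := by
    apply tendsto_integral_filter_of_dominated_convergence
      (bound := fun u : ℝ => (1 + c * u ^ 2)⁻¹)
    · filter_upwards [self_mem_nhdsWithin] with lam (hlam : lam ∈ Ioi (0:ℝ))
      apply Measurable.aestronglyMeasurable
      have hmg : Measurable ((Ioc (-π) π).indicator
          (fun θ => lam * (lam - phi1 a θ)⁻¹)) := by
        apply Measurable.indicator _ measurableSet_Ioc
        exact ((measurable_const.sub
          (Glam_phi1_continuous hsum.summable).measurable).inv).const_mul lam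
      exact hmg.comp (measurable_const_mul (Real.sqrt lam))
    · filter_upwards [self_mem_nhdsWithin] with lam (hlam : lam ∈ Ioi (0:ℝ))
      refine Filter.Eventually.of_forall (fun u => ?_)
      have hlam' : 0 < lam := hlam
      by_cases hmem : Real.sqrt lam * u ∈ Ioc (-π) π
      · rw [hFdef]
        simp only [indicator_of_mem hmem]
        have hIcc : Real.sqrt lam * u ∈ Icc (-π) π := Ioc_subset_Icc_self hmem
        have hq := hquad _ hIcc
        have hsq : (Real.sqrt lam * u) ^ 2 = lam * u ^ 2 := by
          rw [mul_pow, Real.sq_sqrt hlam'.le]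
        rw [hsq] at hq
        have hD : 0 < lam - phi1 a (Real.sqrt lam * u) := by nlinarith [sq_nonneg u]
        have h1c : (0:ℝ) < 1 + c * u ^ 2 := by nlinarith [sq_nonneg u]
        rw [Real.norm_eq_abs, abs_of_nonneg (by positivity)]
        rw [mul_inv_le_iff₀ hD]
        rw [inv_mul_eq_div, le_div_iff₀ h1c]
        nlinarith [sq_nonneg u]
      · rw [hFdef]
        simp only [indicator_of_notMem hmem]
        simp only [norm_zero]
        positivity
    · exact Glam_integrable_inv_one_add_mul_sq hc
    · refine Filter.Eventually.of_forall (fun u => ?_)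
      have hmem_ev : ∀ᶠ lam : ℝ in 𝓝[>] (0:ℝ), Real.sqrt lam * u ∈ Ioc (-π) π := by
        have htend : Tendsto (fun lam : ℝ => Real.sqrt lam * u) (𝓝[>] (0:ℝ)) (𝓝 0) := by
          have h0 : Tendsto (fun lam : ℝ => Real.sqrt lam) (𝓝[>] (0:ℝ)) (𝓝 0) :=
            (Real.continuous_sqrt.tendsto' 0 0 Real.sqrt_zero).mono_left nhdsWithin_le_nhds
          simpa using h0.mul_const u
        have hπ : 0 < π := Real.pi_pos
        have := htend (Metric.ball_mem_nhds (0:ℝ) hπ)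
        filter_upwards [this] with lam hlam
        rw [Set.mem_preimage, Metric.mem_ball, Real.dist_eq, sub_zero] at hlam
        constructor
        · linarith [neg_abs_le (Real.sqrt lam * u), hlam]
        · linarith [le_abs_self (Real.sqrt lam * u), hlam]
      rcases eq_or_ne u 0 with rfl | hu
      · have : ∀ᶠ lam : ℝ in 𝓝[>] (0:ℝ), F lam 0 = 1 := by
          filter_upwards [self_mem_nhdsWithin, hmem_ev] with lam (hlam : lam ∈ Ioi (0:ℝ)) hmem
          simp only [mul_zero] at hmem
          rw [hFdef]
          simp only [mul_zero, indicator_of_mem hmem]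
          rw [Glam_phi1_zero hsum, sub_zero, mul_inv_cancel₀ (ne_of_gt hlam)]
        rw [show ((1 : ℝ) + S / 2 * (0:ℝ) ^ 2)⁻¹ = 1 by norm_num]
        exact Tendsto.congr'
          (by filter_upwards [this] with lam h; exact h.symm) tendsto_const_nhds
      · have hcomp : Tendsto (fun lam : ℝ => Real.sqrt lam * u) (𝓝[>] (0:ℝ)) (𝓝[≠] (0:ℝ)) := by
          rw [tendsto_nhdsWithin_iff]
          constructor
          · have h0 : Tendsto (fun lam : ℝ => Real.sqrt lam) (𝓝[>] (0:ℝ)) (𝓝 0) :=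
              (Real.continuous_sqrt.tendsto' 0 0 Real.sqrt_zero).mono_left nhdsWithin_le_nhds
            simpa using h0.mul_const u
          · filter_upwards [self_mem_nhdsWithin] with lam (hlam : lam ∈ Ioi (0:ℝ))
            have : 0 < Real.sqrt lam := Real.sqrt_pos.mpr hlam
            exact mul_ne_zero this.ne' hu
        have hphi : Tendsto (fun lam : ℝ => phi1 a (Real.sqrt lam * u) / lam)
            (𝓝[>] (0:ℝ)) (𝓝 (-(S / 2) * u ^ 2)) := by
          have h1 := (Glam_phi1_div_sq_tendsto hsum hvar).comp hcomp
          have h2 := h1.mul_const (u ^ 2)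
          apply h2.congr'
          filter_upwards [self_mem_nhdsWithin] with lam (hlam : lam ∈ Ioi (0:ℝ))
          have hlam' : (0:ℝ) < lam := hlam
          have hsq : (Real.sqrt lam * u) ^ 2 = lam * u ^ 2 := by
            rw [mul_pow, Real.sq_sqrt hlam'.le]
          simp only [Function.comp]
          rw [hsq]
          field_simp
        have hlim : Tendsto (fun lam : ℝ => (1 - phi1 a (Real.sqrt lam * u) / lam)⁻¹)
            (𝓝[>] (0:ℝ)) (𝓝 ((1 + S / 2 * u ^ 2)⁻¹)) := by
          have h3 : Tendsto (fun lam : ℝ => 1 - phi1 a (Real.sqrt lam * u) / lam)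
              (𝓝[>] (0:ℝ)) (𝓝 (1 + S / 2 * u ^ 2)) := by
            have := (tendsto_const_nhds (x := (1:ℝ)) (f := 𝓝[>] (0:ℝ))).sub hphi
            convert this using 1
            ring
          have hne : (1 : ℝ) + S / 2 * u ^ 2 ≠ 0 := by
            have : (0:ℝ) < u ^ 2 := by positivity
            nlinarith
          exact h3.inv₀ hne
        apply hlim.congr'
        filter_upwards [self_mem_nhdsWithin, hmem_ev] with lam (hlam : lam ∈ Ioi (0:ℝ)) hmem
        have hlam' : (0:ℝ) < lam := hlam
        rw [hFdef]
        simp only [indicator_of_mem hmem]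
        rw [eq_comm]
        have hIcc := Ioc_subset_Icc_self hmem
        have hq := hquad _ hIcc
        have hsq : (Real.sqrt lam * u) ^ 2 = lam * u ^ 2 := by
          rw [mul_pow, Real.sq_sqrt hlam'.le]
        rw [hsq] at hq
        have hD : 0 < lam - phi1 a (Real.sqrt lam * u) := by nlinarith [sq_nonneg u]
        rw [show (1 : ℝ) - phi1 a (Real.sqrt lam * u) / lam
            = (lam - phi1 a (Real.sqrt lam * u)) / lam by field_simp]
        rw [inv_div, div_eq_mul_inv]
  have := key.congr'
    (by filter_upwards [self_mem_nhdsWithin] with lam (hlam : lam ∈ Ioi (0:ℝ));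
        exact (Glam_sqrt_mul_J hlam).symm)
  rwa [Glam_integral_inv_one_add_mul_sq (by positivity : (0:ℝ) < S / 2)] at this

end AuxGlam

/-- For `d = 1`: `G_λ(0,0) ~ γ₁√π/√λ` as `λ → 0+`, i.e. `√λ G_λ(0,0) → γ₁√π`. -/
theorem Glam_asymptotic_d1
    (a : ℤ → ℝ)
    (hpos : ∀ z : ℤ, z ≠ 0 → 0 ≤ a z)
    (hneg : a 0 < 0)
    (hsymm : ∀ z : ℤ, a (-z) = a z)
    (hsum : HasSum a 0)
    (hvar : Summable fun z : ℤ => (z : ℝ) ^ 2 * a z)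
    (hirr : AddSubgroup.closure {z : ℤ | 0 < a z} = ⊤)
    : Tendsto (fun lam : ℝ => Real.sqrt lam * G1 a lam 0 0) (𝓝[>] (0 : ℝ))
      (𝓝 (gam1 a * Real.sqrt π)) := by
  have hS : 0 < ∑' z : ℤ, a z * (z : ℝ) ^ 2 := Glam_S_pos hpos hneg hvar hirr
  set S := ∑' z : ℤ, a z * (z : ℝ) ^ 2 with hSdef
  have hmain := Glam_main_limit hpos hneg hsum hvar hirr
  have hconst : (2 * π)⁻¹ * (π / Real.sqrt (S / 2)) = gam1 a * Real.sqrt π := by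
    have hπ : 0 < π := Real.pi_pos
    have habs : |phi1'' a| = S := by
      rw [phi1'', abs_neg, abs_of_pos hS]
    rw [gam1, habs]
    have h2 : Real.sqrt (S / 2) = Real.sqrt S / Real.sqrt 2 := by
      rw [Real.sqrt_div hS.le]
    have h3 : Real.sqrt (2 * π * S) = Real.sqrt 2 * Real.sqrt π * Real.sqrt S := by
      rw [Real.sqrt_mul (by positivity), Real.sqrt_mul (by norm_num)]
    have e2 : Real.sqrt 2 * Real.sqrt 2 = 2 := Real.mul_self_sqrt (by norm_num)
    have eπ : Real.sqrt π * Real.sqrt π = π := Real.mul_self_sqrt hπ.le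
    have p2 : (0:ℝ) < Real.sqrt 2 := Real.sqrt_pos.mpr (by norm_num)
    have pπ : (0:ℝ) < Real.sqrt π := Real.sqrt_pos.mpr hπ
    have pS : (0:ℝ) < Real.sqrt S := Real.sqrt_pos.mpr hS
    rw [h2, h3]
    field_simp
    linear_combination e2
  have hfinal := hmain.const_mul ((2 * π)⁻¹)
  rw [← hSdef] at hfinal
  rw [hconst] at hfinal
  apply hfinal.congr'
  filter_upwards [self_mem_nhdsWithin] with lam (hlam : lam ∈ Set.Ioi (0:ℝ))
  have hlam' : (0:ℝ) < lam := hlam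
  rw [Glam_G1_eq hpos hsum hlam']
  ring
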